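/- Let n be a positive integer divisible by 3. Then the subgroup of GL(3,ℂ) generated by L_n and Z₁ (this is the group X(n)) has order 3·n². -/
import Mathlib


open Matrix

/-- The matrix `L_n = diag(1, ν, ν⁻¹)` with `ν = exp(2πi/n)`. -/
noncomputable def Lmatrix (n : ℕ) : Matrix (Fin 3) (Fin 3) ℂ :=
  Matrix.diagonal ![1, Complex.exp (2 * (Real.pi : ℂ) * Complex.I / (n : ℂ)),
    (Complex.exp (2 * (Real.pi : ℂ) * Complex.I / (n : ℂ)))⁻¹]

/-- The matrix `Z_m`, with `(Z_m)₀₂ = μ = exp(2πi/3^m)`, `(Z_m)₁₀ = (Z_m)₂₁ = 1`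
and all other entries `0`. -/
noncomputable def Zmatrix (m : ℕ) : Matrix (Fin 3) (Fin 3) ℂ :=
  !![0, 0, Complex.exp (2 * (Real.pi : ℂ) * Complex.I / ((3 : ℂ) ^ m));
     1, 0, 0;
     0, 1, 0]

noncomputable def nu (n : ℕ) : ℂ := Complex.exp (2 * (Real.pi : ℂ) * Complex.I / (n : ℂ))

lemma nu_ne_zero (n : ℕ) : nu n ≠ 0 := Complex.exp_ne_zero _

lemma nu_prim (n : ℕ) (hn : n ≠ 0) : IsPrimitiveRoot (nu n) n :=
  Complex.isPrimitiveRoot_exp n hn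

lemma nu_pow_n (n : ℕ) (hn : n ≠ 0) : nu n ^ (n : ℤ) = 1 := by
  rw [zpow_natCast]; exact (nu_prim n hn).pow_eq_one

lemma nu_zpow_congr {n : ℕ} (hn : n ≠ 0) {a b : ℤ} (h : a ≡ b [ZMOD (n:ℤ)]) :
    nu n ^ a = nu n ^ b := by
  obtain ⟨t, ht⟩ := h.dvd
  have hb : b = a + n * t := by linarith
  rw [hb, zpow_add₀ (nu_ne_zero n), _root_.zpow_mul, nu_pow_n n hn, _root_.one_zpow, mul_one]

noncomputable def Dmat (n : ℕ) (a b : ℤ) : Matrix (Fin 3) (Fin 3) ℂ :=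
  Matrix.diagonal ![nu n ^ a, nu n ^ b, nu n ^ (-(a+b))]

lemma Dmat_mul (n : ℕ) (a b a' b' : ℤ) :
    Dmat n a b * Dmat n a' b' = Dmat n (a+a') (b+b') := by
  simp only [Dmat, diagonal_mul_diagonal]
  apply congrArg Matrix.diagonal
  funext i
  fin_cases i <;> simp [← zpow_add₀ (nu_ne_zero n)] <;> ring_nf

lemma Dmat_zero (n : ℕ) : Dmat n 0 0 = 1 := by
  have : (![nu n ^ (0:ℤ), nu n ^ (0:ℤ), nu n ^ (-((0:ℤ)+0))] : Fin 3 → ℂ) = 1 := by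
    funext i; fin_cases i <;> simp
  rw [Dmat, this]; exact Matrix.diagonal_one

noncomputable def Dgl (n : ℕ) (a b : ℤ) : GL (Fin 3) ℂ :=
  ⟨Dmat n a b, Dmat n (-a) (-b),
    by rw [Dmat_mul]; simpa using Dmat_zero n,
    by rw [Dmat_mul]; simpa using Dmat_zero n⟩

@[simp] lemma Dgl_val (n : ℕ) (a b : ℤ) : (Dgl n a b).val = Dmat n a b := rfl

lemma Dgl_mul (n : ℕ) (a b a' b' : ℤ) :
    Dgl n a b * Dgl n a' b' = Dgl n (a+a') (b+b') := by
  ext : 1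
  exact Dmat_mul n a b a' b'

lemma Dgl_one (n : ℕ) : Dgl n 0 0 = 1 := by
  ext : 1
  simpa using Dmat_zero n

lemma Dgl_inv (n : ℕ) (a b : ℤ) : (Dgl n a b)⁻¹ = Dgl n (-a) (-b) := by
  refine (inv_eq_of_mul_eq_one_right ?_)
  rw [Dgl_mul]; simpa using Dgl_one n

lemma Dgl_congr {n : ℕ} (hn : n ≠ 0) {a b a' b' : ℤ} (h1 : a ≡ a' [ZMOD (n:ℤ)])
    (h2 : b ≡ b' [ZMOD (n:ℤ)]) : Dgl n a b = Dgl n a' b' := by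
  ext : 1
  simp only [Dgl_val, Dmat]
  apply congrArg Matrix.diagonal
  funext i
  fin_cases i
  · exact nu_zpow_congr hn h1
  · exact nu_zpow_congr hn h2
  · exact nu_zpow_congr hn (by exact (h1.add h2).neg)

lemma Dgl_pow (n : ℕ) (a b : ℤ) (k : ℕ) : (Dgl n a b) ^ k = Dgl n (k * a) (k * b) := by
  induction k with
  | zero => simpa using (Dgl_one n).symm
  | succ k ih => rw [pow_succ, ih, Dgl_mul]; push_cast; ring_nf

lemma Dgl_zpow (n : ℕ) (a b : ℤ) (m : ℤ) : (Dgl n a b) ^ m = Dgl n (m * a) (m * b) := by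
  cases m with
  | ofNat k => simpa using Dgl_pow n a b k
  | negSucc k =>
      rw [zpow_negSucc, Dgl_pow, Dgl_inv]
      congr 1 <;> simp [Int.negSucc_eq] <;> ring


lemma Zmat_mul_Dmat (n : ℕ) (a b : ℤ) :
    Zmatrix 1 * Dmat n a b = Dmat n (-(a+b)) a * Zmatrix 1 := by
  ext i j
  fin_cases i <;> fin_cases j <;>
    simp [Zmatrix, Dmat, Matrix.mul_apply, Fin.sum_univ_three, Matrix.diagonal, Matrix.vecHead, Matrix.vecTail] <;>
    ring_nf

lemma nu_pow_third (t : ℕ) (ht : t ≠ 0) :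
    nu (3 * t) ^ (t : ℤ) = Complex.exp (2 * (Real.pi : ℂ) * Complex.I / ((3:ℂ)^1)) := by
  rw [zpow_natCast, nu, ← Complex.exp_nat_mul]
  congr 1
  have h3t : ((3 * t : ℕ) : ℂ) ≠ 0 :=
    Nat.cast_ne_zero.mpr (Nat.mul_ne_zero three_ne_zero ht)
  have ht' : (t : ℂ) ≠ 0 := Nat.cast_ne_zero.mpr ht
  field_simp
  push_cast
  ring

lemma Zmat_pow_three (t : ℕ) (ht : t ≠ 0) :
    Zmatrix 1 ^ 3 = Dmat (3 * t) t t := by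
  have h1 : nu (3*t) ^ (t:ℤ) = Complex.exp (2 * (Real.pi : ℂ) * Complex.I / ((3:ℂ)^1)) :=
    nu_pow_third t ht
  have h2 : nu (3*t) ^ (-(t:ℤ) + -(t:ℤ)) = nu (3*t) ^ (t:ℤ) := by
    apply nu_zpow_congr (by omega)
    refine Int.ModEq.symm (Int.modEq_iff_dvd.mpr ⟨-1, by push_cast; ring⟩)
  ext i j
  fin_cases i <;> fin_cases j <;>
    simp [Zmatrix, Dmat, pow_succ, Matrix.mul_apply, Fin.sum_univ_three, Matrix.diagonal,
      Matrix.vecHead, Matrix.vecTail, h1, h2]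


lemma Lmat_eq_Dmat (n : ℕ) : Lmatrix n = Dmat n 0 1 := by
  unfold Lmatrix Dmat
  apply congrArg Matrix.diagonal
  funext i
  fin_cases i <;> simp [nu]

section ZGL
variable {n : ℕ} {Z : GL (Fin 3) ℂ}

lemma Z_mul_Dgl (hZ : Z.val = Zmatrix 1) (a b : ℤ) : Z * Dgl n a b = Dgl n (-(a+b)) a * Z := by
  apply Units.ext
  simp only [Units.val_mul, Dgl_val, hZ]
  exact Zmat_mul_Dmat n a b

lemma Zpow_mul_Dgl (hZ : Z.val = Zmatrix 1) (k : ℕ) (a b : ℤ) :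
    ∃ a' b', Z ^ k * Dgl n a b = Dgl n a' b' * Z ^ k := by
  induction k with
  | zero => exact ⟨a, b, by simp⟩
  | succ k ih =>
      obtain ⟨a', b', h⟩ := ih
      refine ⟨-(a'+b'), a', ?_⟩
      rw [pow_succ', mul_assoc, h, ← mul_assoc, Z_mul_Dgl hZ, mul_assoc, ← pow_succ']

lemma Z_pow_three (hZ : Z.val = Zmatrix 1) {t : ℕ} (ht : t ≠ 0) (hnt : n = 3 * t) : Z ^ 3 = Dgl n t t := by
  apply Units.ext
  simp only [Units.val_pow_eq_pow_val, Dgl_val, hZ, hnt]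
  exact Zmat_pow_three t ht

lemma Z_pow_nine (hZ : Z.val = Zmatrix 1) {t : ℕ} (ht : t ≠ 0) (hnt : n = 3 * t) : Z ^ 9 = 1 := by
  have h9 : (9 : ℕ) = 3 * 3 := rfl
  rw [h9, pow_mul, Z_pow_three hZ ht hnt, Dgl_pow]
  rw [show ((3:ℕ) * (t:ℤ)) = ((n : ℤ)) by rw [hnt]; push_cast; ring]
  rw [Dgl_congr (n := n) (by omega) (Int.modEq_zero_iff_dvd.mpr dvd_rfl)
    (Int.modEq_zero_iff_dvd.mpr dvd_rfl), Dgl_one]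

end ZGL

lemma nu_inj (n : ℕ) (hn : n ≠ 0) {a b : ℕ} (ha : a < n) (hb : b < n)
    (h : nu n ^ (a:ℤ) = nu n ^ (b:ℤ)) : a = b := by
  rw [zpow_natCast, zpow_natCast] at h
  exact (nu_prim n hn).pow_inj ha hb h

lemma Dmat_Zpow_inj (n : ℕ) (hn : n ≠ 0) {a b a' b' k k' : ℕ}
    (ha : a < n) (hb : b < n) (ha' : a' < n) (hb' : b' < n) (hk : k < 3) (hk' : k' < 3)
    (h : Dmat n (a:ℤ) (b:ℤ) * Zmatrix 1 ^ k = Dmat n (a':ℤ) (b':ℤ) * Zmatrix 1 ^ k') :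
    a = a' ∧ b = b' ∧ k = k' := by
  have hne := nu_ne_zero n
  have hme := Complex.exp_ne_zero (2 * (Real.pi : ℂ) * Complex.I / ((3:ℂ)^1))
  interval_cases k <;> interval_cases k' <;>
    [skip; skip; skip; skip; skip; skip; skip; skip; skip] <;>
  · first
    | (refine ⟨?_, ?_, rfl⟩
       · have h00 := congrFun (congrFun h 0) 0
         have h02 := congrFun (congrFun h 0) 2
         have h01 := congrFun (congrFun h 0) 1
         have h11 := congrFun (congrFun h 1) 1
         have h10 := congrFun (congrFun h 1) 0
         have h12 := congrFun (congrFun h 1) 2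
         simp [Dmat, Zmatrix, pow_succ, Matrix.mul_apply, Fin.sum_univ_three,
           Matrix.diagonal, Matrix.vecHead, Matrix.vecTail, hme] at h00 h02 h01 h11 h10 h12
         exact nu_inj n hn ha ha' (by assumption)
       · have h11 := congrFun (congrFun h 1) 1
         have h10 := congrFun (congrFun h 1) 0
         have h12 := congrFun (congrFun h 1) 2
         simp [Dmat, Zmatrix, pow_succ, Matrix.mul_apply, Fin.sum_univ_three,
           Matrix.diagonal, Matrix.vecHead, Matrix.vecTail, hme] at h11 h10 h12
         exact nu_inj n hn hb hb' (by assumption))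
    | (exfalso
       have h00 := congrFun (congrFun h 0) 0
       have h10 := congrFun (congrFun h 1) 0
       simp [Dmat, Zmatrix, pow_succ, Matrix.mul_apply, Fin.sum_univ_three,
         Matrix.diagonal, Matrix.vecHead, Matrix.vecTail, hne, hme] at h00 h10
       all_goals first
         | exact absurd h00.symm (pow_ne_zero _ hne)
         | exact absurd h10.symm (pow_ne_zero _ hne))

/-- The group `X(n)`, generated by `L_n` and `Z₁` inside `GL(3,ℂ)`, has order `3·n²`. -/
theorem Xn_order (n : ℕ) (hn : 0 < n) (hn3 : 3 ∣ n)
    (L Z : GL (Fin 3) ℂ)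
    (hL : L.val = Lmatrix n) (hZ : Z.val = Zmatrix 1) :
    Nat.card ↥(Subgroup.closure ({L, Z} : Set (GL (Fin 3) ℂ))) = 3 * n ^ 2 := by
  obtain ⟨t, hnt⟩ := hn3
  have ht : t ≠ 0 := by omega
  have hn0 : n ≠ 0 := by omega
  haveI : NeZero n := ⟨hn0⟩
  have hLD : L = Dgl n 0 1 := by
    apply Units.ext; rw [hL, Dgl_val, Lmat_eq_Dmat]
  -- the candidate carrier set
  set T : Set (GL (Fin 3) ℂ) := {g | ∃ a b : ℤ, ∃ k : ℕ, g = Dgl n a b * Z ^ k} with hT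
  have h9 : Z ^ 9 = 1 := Z_pow_nine hZ ht hnt
  -- T is a subgroup
  let S : Subgroup (GL (Fin 3) ℂ) :=
    { carrier := T
      one_mem' := ⟨0, 0, 0, by simp [Dgl_one n]⟩
      mul_mem' := by
        rintro x y ⟨a, b, k, rfl⟩ ⟨a', b', k', rfl⟩
        obtain ⟨a'', b'', hc⟩ := Zpow_mul_Dgl hZ k a' b'
        refine ⟨a + a'', b + b'', k + k', ?_⟩
        rw [pow_add, ← Dgl_mul, mul_assoc, mul_assoc, ← mul_assoc (Z ^ k), hc, mul_assoc (Dgl n a'' b'')]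
      inv_mem' := by
        rintro x ⟨a, b, k, rfl⟩
        have hzinv : (Z ^ k)⁻¹ = Z ^ (8 * k) := by
          refine (eq_inv_of_mul_eq_one_left ?_).symm
          rw [← pow_add, show 8 * k + k = 9 * k by ring, pow_mul, h9, one_pow]
        obtain ⟨a'', b'', hc⟩ := Zpow_mul_Dgl (n := n) hZ (8 * k) (-a) (-b)
        refine ⟨a'', b'', 8 * k, ?_⟩
        rw [_root_.mul_inv_rev, hzinv, Dgl_inv, hc]
      }
  have hTS : T = (S : Set (GL (Fin 3) ℂ)) := rfl
  -- closure = T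
  have hset : (Subgroup.closure ({L, Z} : Set (GL (Fin 3) ℂ)) : Set _) = T := by
    apply le_antisymm
    · refine Subgroup.closure_le S |>.mpr ?_
      rintro g (rfl | rfl)
      · exact ⟨0, 1, 0, by rw [hLD, pow_zero, mul_one]⟩
      · exact ⟨0, 0, 1, by rw [Dgl_one n, pow_one, one_mul]⟩
    · rintro g ⟨a, b, k, rfl⟩
      have hZC : Z ∈ Subgroup.closure ({L, Z} : Set (GL (Fin 3) ℂ)) :=
        Subgroup.subset_closure (by simp)
      have hLC : L ∈ Subgroup.closure ({L, Z} : Set (GL (Fin 3) ℂ)) :=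
        Subgroup.subset_closure (by simp)
      have hD10 : Dgl n 1 0 ∈ Subgroup.closure ({L, Z} : Set (GL (Fin 3) ℂ)) := by
        have hzd : Z * Dgl n (-0) (-1) = Dgl n 1 0 * Z := by
          rw [Z_mul_Dgl (n := n) hZ (-0) (-1)]
          norm_num
        have hD10eq : Z * L⁻¹ * Z⁻¹ = Dgl n 1 0 := by
          rw [hLD, Dgl_inv, hzd, mul_assoc]
          simp
        exact hD10eq ▸ mul_mem (mul_mem hZC (inv_mem hLC)) (inv_mem hZC)
      have hDab : Dgl n a b ∈ Subgroup.closure ({L, Z} : Set (GL (Fin 3) ℂ)) := by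
        have he : Dgl n a b = (Dgl n 1 0) ^ a * (Dgl n 0 1) ^ b := by
          rw [Dgl_zpow, Dgl_zpow, Dgl_mul]
          norm_num
        rw [he]
        exact mul_mem (Subgroup.zpow_mem _ hD10 a)
          (Subgroup.zpow_mem _ (hLD ▸ hLC) b)
      exact mul_mem hDab (Subgroup.pow_mem _ hZC k)
  -- counting
  set f : ZMod n × ZMod n × Fin 3 → GL (Fin 3) ℂ :=
    fun p => Dgl n (p.1.val : ℤ) (p.2.1.val : ℤ) * Z ^ (p.2.2 : ℕ) with hf
  have hval_congr : ∀ x : ℤ, (((x : ZMod n)).val : ℤ) ≡ x [ZMOD (n:ℤ)] := by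
    intro x
    rw [← ZMod.intCast_eq_intCast_iff]
    push_cast
    simp [ZMod.natCast_val, ZMod.cast_id]
  have hrange : Set.range f = T := by
    apply le_antisymm
    · rintro g ⟨⟨a, b, k⟩, rfl⟩
      exact ⟨(a.val : ℤ), (b.val : ℤ), (k : ℕ), rfl⟩
    · rintro g ⟨a, b, k, rfl⟩
      obtain ⟨q, r, hr, rfl⟩ : ∃ q r, r < 3 ∧ k = 3 * q + r :=
        ⟨k / 3, k % 3, Nat.mod_lt _ (by norm_num), (Nat.div_add_mod k 3).symm⟩
      have hZk : Z ^ (3 * q + r) = Dgl n ((q : ℤ) * t) ((q : ℤ) * t) * Z ^ r := by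
        rw [pow_add, pow_mul, Z_pow_three hZ ht hnt, Dgl_pow]
      refine ⟨((((a + (q : ℤ) * t : ℤ) : ZMod n)),
              (((b + (q : ℤ) * t : ℤ) : ZMod n)),
              ⟨r, hr⟩), ?_⟩
      simp only [hf]
      rw [hZk, ← mul_assoc, Dgl_mul]
      congr 1
      exact Dgl_congr hn0 (hval_congr _) (hval_congr _)
  have hinj : Function.Injective f := by
    rintro ⟨a, b, k⟩ ⟨a', b', k'⟩ he
    have hmat : Dmat n (a.val : ℤ) (b.val : ℤ) * Zmatrix 1 ^ (k : ℕ)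
        = Dmat n (a'.val : ℤ) (b'.val : ℤ) * Zmatrix 1 ^ (k' : ℕ) := by
      have := congrArg Units.val he
      simpa [hf, Units.val_mul, hZ] using this
    obtain ⟨h1, h2, h3⟩ := Dmat_Zpow_inj n hn0 (ZMod.val_lt a) (ZMod.val_lt b)
      (ZMod.val_lt a') (ZMod.val_lt b') k.isLt k'.isLt hmat
    exact Prod.ext (ZMod.val_injective n h1)
      (Prod.ext (ZMod.val_injective n h2) (Fin.ext h3))
  calc Nat.card ↥(Subgroup.closure ({L, Z} : Set (GL (Fin 3) ℂ)))
      = Nat.card ↥T := by rw [← hset]; rfl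
    _ = Nat.card ↥(Set.range f) := by rw [hrange]
    _ = Nat.card (ZMod n × ZMod n × Fin 3) := Nat.card_range_of_injective hinj
    _ = 3 * n ^ 2 := by
        simp [Nat.card_prod, Nat.card_zmod, Nat.card_eq_fintype_card]
        ring
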